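/- Let G(t) = 2(1−Φ(t)) where Φ is the standard normal CDF. Then for any M>1 and b>0, ∫₀^{G⁻¹(b/M)} 1/(M·G(t)) dt ≤ C/(b·√(log(M/b))) for some absolute constant C>0, provided b/M ≤ 1/2 and M/b is large enough (say M/b ≥ e). -/

import Mathlib

open MeasureTheory ProbabilityTheory intervalIntegral

/-- The standard normal CDF. -/
noncomputable def stdNormalCDF (t : ℝ) : ℝ :=
  (gaussianReal 0 1 (Set.Iic t)).toReal

/-- `G(t) = 2(1 - Φ(t))`. -/
noncomputable def Gtail (t : ℝ) : ℝ := 2 * (1 - stdNormalCDF t)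

noncomputable def npdf (x : ℝ) : ℝ := (Real.sqrt (2*Real.pi))⁻¹ * Real.exp (-x^2/2)

lemma npdf_eq : npdf = gaussianPDFReal 0 1 := by
  ext x
  simp [npdf, gaussianPDFReal]


lemma stdNormalCDF_eq (t : ℝ) : stdNormalCDF t = ∫ x in Set.Iic t, npdf x := by
  rw [stdNormalCDF, gaussianReal_apply_eq_integral 0 one_ne_zero, ENNReal.toReal_ofReal, npdf_eq]
  exact integral_nonneg fun x => gaussianPDFReal_nonneg 0 1 x

lemma npdf_integrable : Integrable npdf := by
  rw [npdf_eq]; exact integrable_gaussianPDFReal 0 1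

lemma tail_eq (t : ℝ) : 1 - stdNormalCDF t = ∫ x in Set.Ioi t, npdf x := by
  have h := integral_add_compl (measurableSet_Iic (a := t)) npdf_integrable
  rw [Set.compl_Iic] at h
  have h1 : ∫ x, npdf x = 1 := by rw [npdf_eq]; exact integral_gaussianPDFReal_eq_one 0 one_ne_zero
  rw [stdNormalCDF_eq]; linarith

lemma npdf_pos (x : ℝ) : 0 < npdf x := by
  apply mul_pos _ (Real.exp_pos _)
  rw [inv_pos]
  exact Real.sqrt_pos.2 (by positivity)

lemma integral_x_exp (t : ℝ) : ∫ x in Set.Ioi t, x * Real.exp (-x^2/2) = Real.exp (-t^2/2) := by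
  have hd : ∀ x : ℝ, HasDerivAt (fun y => -Real.exp (-y^2/2)) (x * Real.exp (-x^2/2)) x := by
    intro x
    have h1 : HasDerivAt (fun y : ℝ => -y^2/2) (-x) x := by
      have := ((hasDerivAt_pow 2 x).neg).div_const 2
      simpa using this.congr_deriv (by ring)
    have := (h1.exp).neg
    exact this.congr_deriv (by ring)
  have hint : Integrable (fun x : ℝ => x * Real.exp (-x^2/2)) := by
    have := integrable_mul_exp_neg_mul_sq (by norm_num : (0:ℝ) < 1/2)
    refine this.congr (Filter.Eventually.of_forall fun x => ?_)
    ring_nf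
  have htend : Filter.Tendsto (fun y : ℝ => -Real.exp (-y^2/2)) Filter.atTop (nhds 0) := by
    rw [show (0:ℝ) = -0 by ring]
    apply Filter.Tendsto.neg
    apply Real.tendsto_exp_atBot.comp
    have h2 : Filter.Tendsto (fun x : ℝ => x^2) Filter.atTop Filter.atTop :=
      Filter.tendsto_pow_atTop two_ne_zero
    have h3 := (Filter.tendsto_neg_atTop_atBot.comp h2).atBot_div_const (by norm_num : (0:ℝ) < 2)
    exact h3.congr (fun x => by simp [Function.comp])
  have := MeasureTheory.integral_Ioi_of_hasDerivAt_of_tendsto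
    (f := fun y => -Real.exp (-y^2/2)) (f' := fun x => x * Real.exp (-x^2/2))
    (hd t).continuousAt.continuousWithinAt (fun x _ => hd x) hint.integrableOn htend
  rw [this]; ring

lemma exp_sq_integrable : Integrable (fun x : ℝ => Real.exp (-x^2/2)) := by
  have := integrable_exp_neg_mul_sq (by norm_num : (0:ℝ) < 1/2)
  refine this.congr (Filter.Eventually.of_forall fun x => ?_)
  ring_nf

lemma x_exp_integrable : Integrable (fun x : ℝ => x * Real.exp (-x^2/2)) := by
  have := integrable_mul_exp_neg_mul_sq (by norm_num : (0:ℝ) < 1/2)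
  refine this.congr (Filter.Eventually.of_forall fun x => ?_)
  ring_nf

lemma Gtail_eq (t : ℝ) : Gtail t = 2 * ∫ x in Set.Ioi t, npdf x := by
  rw [Gtail, tail_eq]

lemma tail_upper {t : ℝ} (ht : 0 < t) :
    ∫ x in Set.Ioi t, npdf x ≤ (Real.sqrt (2*Real.pi))⁻¹ * (Real.exp (-t^2/2) / t) := by
  have key : ∫ x in Set.Ioi t, Real.exp (-x^2/2) ≤ Real.exp (-t^2/2) / t := by
    have h1 : ∫ x in Set.Ioi t, Real.exp (-x^2/2) ≤ ∫ x in Set.Ioi t, t⁻¹ * (x * Real.exp (-x^2/2)) := by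
      apply setIntegral_mono_on exp_sq_integrable.integrableOn
        ((x_exp_integrable.const_mul t⁻¹).integrableOn) measurableSet_Ioi
      intro x hx
      rw [← mul_assoc, le_mul_iff_one_le_left (Real.exp_pos _), inv_mul_eq_div]
      exact (one_le_div ht).2 hx.le
    calc ∫ x in Set.Ioi t, Real.exp (-x^2/2)
        ≤ ∫ x in Set.Ioi t, t⁻¹ * (x * Real.exp (-x^2/2)) := h1
      _ = t⁻¹ * ∫ x in Set.Ioi t, x * Real.exp (-x^2/2) := by rw [MeasureTheory.integral_const_mul]
      _ = Real.exp (-t^2/2) / t := by rw [integral_x_exp]; field_simp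
  calc ∫ x in Set.Ioi t, npdf x
      = (Real.sqrt (2*Real.pi))⁻¹ * ∫ x in Set.Ioi t, Real.exp (-x^2/2) := by
        rw [← MeasureTheory.integral_const_mul]; rfl
    _ ≤ (Real.sqrt (2*Real.pi))⁻¹ * (Real.exp (-t^2/2) / t) := by
        have h0 : (0:ℝ) ≤ (Real.sqrt (2*Real.pi))⁻¹ := by positivity
        exact mul_le_mul_of_nonneg_left key h0

lemma npdf_anti {x y : ℝ} (hx : 0 ≤ x) (hxy : x ≤ y) : npdf y ≤ npdf x := by
  unfold npdf
  have h0 : (0:ℝ) ≤ (Real.sqrt (2*Real.pi))⁻¹ := by positivity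
  apply mul_le_mul_of_nonneg_left _ h0
  apply Real.exp_le_exp.2
  have : x^2 ≤ y^2 := by nlinarith
  linarith

lemma tail_lower {t : ℝ} (ht : 1 ≤ t) :
    Real.exp (-(3:ℝ)/2) * ((Real.sqrt (2*Real.pi))⁻¹ * (Real.exp (-t^2/2) / t))
      ≤ ∫ x in Set.Ioi t, npdf x := by
  have ht0 : 0 < t := lt_of_lt_of_le one_pos ht
  have hsub : Set.Ioc t (t + 1/t) ⊆ Set.Ioi t := Set.Ioc_subset_Ioi_self
  have step1 : ∫ x in Set.Ioc t (t + 1/t), npdf x ≤ ∫ x in Set.Ioi t, npdf x := by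
    apply setIntegral_mono_set npdf_integrable.integrableOn
      (Filter.Eventually.of_forall fun x => (npdf_pos x).le)
      (HasSubset.Subset.eventuallyLE hsub)
  have step2 : npdf (t + 1/t) * (1/t) ≤ ∫ x in Set.Ioc t (t + 1/t), npdf x := by
    have hconst : ∫ _x in Set.Ioc t (t + 1/t), npdf (t + 1/t) = npdf (t + 1/t) * (1/t) := by
      rw [setIntegral_const, measureReal_def, Real.volume_Ioc, ENNReal.toReal_ofReal (by rw [add_sub_cancel_left]; positivity)]
      rw [smul_eq_mul, mul_comm]
      ring_nf
    rw [← hconst]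
    apply setIntegral_mono_on (integrableOn_const (by rw [Real.volume_Ioc]; exact ENNReal.ofReal_ne_top)) npdf_integrable.integrableOn
      measurableSet_Ioc
    · intro x hx
      exact npdf_anti (le_trans (le_trans zero_le_one ht) hx.1.le) hx.2
  have step3 : Real.exp (-(3:ℝ)/2) * ((Real.sqrt (2*Real.pi))⁻¹ * (Real.exp (-t^2/2) / t))
      ≤ npdf (t + 1/t) * (1/t) := by
    unfold npdf
    have hexp : Real.exp (-(3:ℝ)/2) * Real.exp (-t^2/2) ≤ Real.exp (-(t + 1/t)^2/2) := by
      rw [← Real.exp_add]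
      apply Real.exp_le_exp.2
      have h1 : 1/t ≤ 1 := by rw [div_le_one ht0]; exact ht
      have h2 : (t + 1/t)^2 = t^2 + 2 + (1/t)^2 := by field_simp; ring
      nlinarith [sq_nonneg (1/t)]
    have h0 : (0:ℝ) ≤ (Real.sqrt (2*Real.pi))⁻¹ := by positivity
    have := mul_le_mul_of_nonneg_left hexp h0
    calc Real.exp (-(3:ℝ)/2) * ((Real.sqrt (2*Real.pi))⁻¹ * (Real.exp (-t^2/2) / t))
        = ((Real.sqrt (2*Real.pi))⁻¹ * (Real.exp (-(3:ℝ)/2) * Real.exp (-t^2/2))) * (1/t) := by ring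
      _ ≤ ((Real.sqrt (2*Real.pi))⁻¹ * Real.exp (-(t + 1/t)^2/2)) * (1/t) := by
          apply mul_le_mul_of_nonneg_right this (by positivity)
  linarith

lemma Gtail_anti : Antitone Gtail := by
  intro x y hxy
  rw [Gtail_eq, Gtail_eq]
  have : ∫ u in Set.Ioi y, npdf u ≤ ∫ u in Set.Ioi x, npdf u := by
    apply setIntegral_mono_set npdf_integrable.integrableOn
      (Filter.Eventually.of_forall fun u => (npdf_pos u).le)
      (HasSubset.Subset.eventuallyLE (Set.Ioi_subset_Ioi hxy))
  linarith

lemma Gtail_pos (t : ℝ) : 0 < Gtail t := by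
  rw [Gtail_eq]
  have h1 : (1:ℝ) ≤ max t 0 + 1 := le_add_of_nonneg_left (le_max_right t 0)
  have h2 := tail_lower h1
  have h3 : ∫ x in Set.Ioi (max t 0 + 1), npdf x ≤ ∫ x in Set.Ioi t, npdf x := by
    apply setIntegral_mono_set npdf_integrable.integrableOn
      (Filter.Eventually.of_forall fun u => (npdf_pos u).le)
      (HasSubset.Subset.eventuallyLE (Set.Ioi_subset_Ioi (by
        have := le_max_left t 0; linarith)))
  have h4 : 0 < Real.exp (-(3:ℝ)/2) * ((Real.sqrt (2*Real.pi))⁻¹ *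
      (Real.exp (-(max t 0 + 1)^2/2) / (max t 0 + 1))) := by
    have : (0:ℝ) < max t 0 + 1 := by linarith
    positivity
  linarith

lemma sqrt_two_pi_ge : (2:ℝ) ≤ Real.sqrt (2*Real.pi) := by
  have h4 : (4:ℝ) ≤ 2*Real.pi := by nlinarith [Real.pi_gt_three]
  calc (2:ℝ) = Real.sqrt 4 := by
        rw [show (4:ℝ) = 2^2 by norm_num, Real.sqrt_sq (by norm_num : (0:ℝ) ≤ 2)]
    _ ≤ Real.sqrt (2*Real.pi) := Real.sqrt_le_sqrt h4

lemma sqrt_two_pi_le : Real.sqrt (2*Real.pi) ≤ 2.51 := by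
  rw [show (2.51:ℝ) = Real.sqrt (2.51^2) by rw [Real.sqrt_sq]; norm_num]
  apply Real.sqrt_le_sqrt
  nlinarith [Real.pi_lt_d2]

lemma Gtail_upper {t : ℝ} (ht : 1 ≤ t) : Gtail t ≤ Real.exp (-t^2/2) := by
  have ht0 : 0 < t := lt_of_lt_of_le one_pos ht
  rw [Gtail_eq]
  have h1 := tail_upper ht0
  have h2 : (Real.sqrt (2*Real.pi))⁻¹ ≤ 1/2 := by
    rw [inv_le_iff_one_le_mul₀ (by positivity)]
    nlinarith [sqrt_two_pi_ge]
  have h3 : Real.exp (-t^2/2) / t ≤ Real.exp (-t^2/2) := by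
    rw [div_le_iff₀ ht0]
    nlinarith [Real.exp_pos (-t^2/2)]
  have h4 : (Real.sqrt (2*Real.pi))⁻¹ * (Real.exp (-t^2/2) / t) ≤ (1/2) * Real.exp (-t^2/2) := by
    apply mul_le_mul h2 h3 (by positivity) (by norm_num)
  linarith

lemma Gtail_one_lb : (1:ℝ)/10 ≤ Gtail 1 := by
  rw [Gtail_eq]
  have h2 := tail_lower (le_refl (1:ℝ))
  have h3 : (1:ℝ)/20 ≤ Real.exp (-(3:ℝ)/2) * ((Real.sqrt (2*Real.pi))⁻¹ *
      (Real.exp (-(1:ℝ)^2/2) / 1)) := by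
    have he : Real.exp (-(3:ℝ)/2) * Real.exp (-(1:ℝ)^2/2) = (Real.exp 1 * Real.exp 1)⁻¹ := by
      rw [← Real.exp_add, ← Real.exp_add, ← Real.exp_neg]
      norm_num
    have h1 : Real.exp 1 < 2.7182818286 := Real.exp_one_lt_d9
    have h0 : 0 < Real.exp 1 := Real.exp_pos 1
    have hs := sqrt_two_pi_le
    have hs0 : 0 < Real.sqrt (2*Real.pi) := by positivity
    rw [div_one, show Real.exp (-(3:ℝ)/2) * ((Real.sqrt (2*Real.pi))⁻¹ * Real.exp (-(1:ℝ)^2/2))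
      = (Real.exp (-(3:ℝ)/2) * Real.exp (-(1:ℝ)^2/2)) * (Real.sqrt (2*Real.pi))⁻¹ by ring, he]
    have hy : (Real.exp 1 * Real.exp 1) * Real.sqrt (2*Real.pi) ≤ 20 := by nlinarith
    calc (1:ℝ)/20 ≤ ((Real.exp 1 * Real.exp 1) * Real.sqrt (2*Real.pi))⁻¹ := by
          rw [one_div]
          exact inv_anti₀ (by positivity) hy
      _ = (Real.exp 1 * Real.exp 1)⁻¹ * (Real.sqrt (2*Real.pi))⁻¹ := by rw [mul_inv]
  linarith

lemma exp_32_le : Real.exp ((3:ℝ)/2) ≤ 5 := by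
  have h3 : Real.exp ((3:ℝ)/2) * Real.exp ((3:ℝ)/2) = Real.exp 1 ^ 3 := by
    rw [← Real.exp_add, show (3:ℝ)/2 + 3/2 = (3:ℕ) * 1 by norm_num, Real.exp_nat_mul]
  have h1 : Real.exp 1 < 2.7182818286 := Real.exp_one_lt_d9
  have h0 : 0 < Real.exp 1 := Real.exp_pos 1
  have h2 : Real.exp 1 ^ 3 < 20.1 := by
    calc Real.exp 1 ^ 3 < 2.7182818286^3 := by
          apply pow_lt_pow_left₀ h1 h0.le (by norm_num)
      _ < 20.1 := by norm_num
  nlinarith [Real.exp_pos ((3:ℝ)/2), sq_nonneg (Real.exp ((3:ℝ)/2) - 5)]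

lemma inv_Gtail_le {t : ℝ} (ht : 1 ≤ t) :
    1 / Gtail t ≤ 8 * (t * Real.exp (t^2/2)) := by
  have ht0 : 0 < t := lt_of_lt_of_le one_pos ht
  set A := 2 * (Real.exp (-(3:ℝ)/2) * ((Real.sqrt (2*Real.pi))⁻¹ * (Real.exp (-t^2/2) / t)))
    with hAdef
  have hA : 0 < A := by positivity
  have hAG : A ≤ Gtail t := by rw [Gtail_eq]; have := tail_lower ht; linarith
  have h1 : 1 / Gtail t ≤ 1 / A := one_div_le_one_div_of_le hA hAG
  have h2 : 1 / A ≤ 8 * (t * Real.exp (t^2/2)) := by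
    rw [div_le_iff₀ hA, hAdef]
    have hE : Real.exp (-t^2/2) = (Real.exp (t^2/2))⁻¹ := by
      rw [← Real.exp_neg]; ring_nf
    have h32 : Real.exp (-(3:ℝ)/2) = (Real.exp ((3:ℝ)/2))⁻¹ := by
      rw [← Real.exp_neg]; norm_num
    rw [hE, h32]
    have hEpos : 0 < Real.exp (t^2/2) := Real.exp_pos _
    have h32pos : 0 < Real.exp ((3:ℝ)/2) := Real.exp_pos _
    have hsle := sqrt_two_pi_le
    have hsge := sqrt_two_pi_ge
    have hsp : 0 < Real.sqrt (2*Real.pi) := by linarith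
    have he32 := exp_32_le
    rw [show 8 * (t * Real.exp (t^2/2)) *
        (2 * ((Real.exp ((3:ℝ)/2))⁻¹ * ((Real.sqrt (2*Real.pi))⁻¹ * ((Real.exp (t^2/2))⁻¹ / t))))
      = 16 * ((Real.exp (t^2/2)) * (Real.exp (t^2/2))⁻¹) * (t * t⁻¹) *
        ((Real.exp ((3:ℝ)/2))⁻¹ * (Real.sqrt (2*Real.pi))⁻¹) by field_simp; ring]
    rw [mul_inv_cancel₀ (ne_of_gt hEpos), mul_inv_cancel₀ (ne_of_gt ht0)]
    rw [show (16:ℝ) * 1 * 1 * ((Real.exp ((3:ℝ)/2))⁻¹ * (Real.sqrt (2*Real.pi))⁻¹)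
      = 16 * (Real.exp ((3:ℝ)/2) * Real.sqrt (2*Real.pi))⁻¹ by rw [mul_inv]; ring]
    rw [show (1:ℝ) = (Real.exp ((3:ℝ)/2) * Real.sqrt (2*Real.pi)) *
      (Real.exp ((3:ℝ)/2) * Real.sqrt (2*Real.pi))⁻¹ by
        rw [mul_inv_cancel₀ (by positivity)]]
    apply mul_le_mul_of_nonneg_right _ (by positivity)
    nlinarith
  linarith

lemma le_exp_half_sq (s : ℝ) : s ≤ Real.exp (s^2/2) := by
  nlinarith [Real.add_one_le_exp (s^2/2)]

lemma twelve_le_exp_three : (12:ℝ) ≤ Real.exp 3 := by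
  have h3 : Real.exp 3 = Real.exp 1 ^ 3 := by
    rw [show (3:ℝ) = (3:ℕ) * 1 by norm_num, Real.exp_nat_mul]
  have h1 := Real.exp_one_gt_d9
  rw [h3]
  calc (12:ℝ) ≤ 2.7^3 := by norm_num
    _ ≤ Real.exp 1 ^ 3 := by
        apply pow_le_pow_left₀ (by norm_num) (by linarith) 3

lemma aux_lb {a c X : ℝ} (ha : 1/8 ≤ a) (hc : 1/3 ≤ c) (hX : 0 ≤ X) :
    1/12 * X ≤ 2*(a*(c*X)) := by
  have hac : 1/24 ≤ a*c := by
    calc (1:ℝ)/24 = (1/8)*(1/3) := by norm_num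
      _ ≤ a*c := mul_le_mul ha hc (by norm_num) (by linarith)
  nlinarith [mul_le_mul_of_nonneg_right hac hX]

lemma aux_Mb {M b X : ℝ} (hM : 0 < M) (hb : 0 < b) (hX : 0 < X)
    (h : 1/12 * X⁻¹ ≤ b/M) : M/b ≤ 12 * X := by
  rw [le_div_iff₀ hM] at h
  rw [div_le_iff₀ hb]
  have hXi : X * X⁻¹ = 1 := mul_inv_cancel₀ hX.ne'
  nlinarith [mul_le_mul_of_nonneg_left h (le_of_lt (mul_pos (by norm_num : (0:ℝ)<12) hX))]

/-- there is an absolute constant `C > 0` such that for all `M`, `b` with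
`0 < b`, `b ≤ M / e`, and any `s ≥ 0` with `G(s) = b / M` (i.e. `s = G⁻¹(b/M)`),
`∫₀^s 1/(M·G(t)) dt ≤ C / (b·√(log (M/b)))`. -/
theorem integral_inv_MG_le :
    ∃ C : ℝ, 0 < C ∧ ∀ M b s : ℝ, 0 < b → b ≤ M / Real.exp 1 → b / M ≤ 1 / 2 →
      0 ≤ s → Gtail s = b / M →
      ∫ t in (0:ℝ)..s, 1 / (M * Gtail t) ≤ C / (b * Real.sqrt (Real.log (M / b))) := by
  refine ⟨50, by norm_num, ?_⟩
  intro M b s hb hbe hhalf hs0 hGs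
  have he1 : (1:ℝ) < Real.exp 1 := by
    have := Real.exp_one_gt_d9; linarith
  have hepos : 0 < Real.exp 1 := Real.exp_pos 1
  rw [le_div_iff₀ hepos] at hbe
  have hM : 0 < M := lt_of_lt_of_le (by nlinarith) hbe
  set L := Real.log (M/b) with hLdef
  have hMb : Real.exp 1 ≤ M/b := by rw [le_div_iff₀ hb]; nlinarith
  have hMb1 : 1 ≤ M/b := le_trans he1.le hMb
  have hMbpos : 0 < M/b := by positivity
  have hL1 : 1 ≤ L := (Real.le_log_iff_exp_le hMbpos).2 hMb
  have hsqL : 1 ≤ Real.sqrt L := by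
    rw [show (1:ℝ) = Real.sqrt 1 by simp]
    exact Real.sqrt_le_sqrt hL1
  have hsqLpos : 0 < Real.sqrt L := lt_of_lt_of_le one_pos hsqL
  have hsqL_le_Mb : Real.sqrt L ≤ M/b := by
    have h1 : L ≤ M/b := le_trans (Real.log_le_sub_one_of_pos hMbpos) (by linarith)
    calc Real.sqrt L ≤ Real.sqrt ((M/b)^2) := by
          apply Real.sqrt_le_sqrt; nlinarith
      _ = M/b := Real.sqrt_sq hMbpos.le
  have hmono : MonotoneOn (fun t => 1/(M * Gtail t)) (Set.Icc 0 s) := by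
    intro x _ y _ hxy
    have h1 : Gtail y ≤ Gtail x := Gtail_anti hxy
    have h2 : 0 < Gtail y := Gtail_pos y
    apply one_div_le_one_div_of_le (by positivity) (by nlinarith)
  have hint : ∀ u v : ℝ, u ∈ Set.Icc 0 s → v ∈ Set.Icc 0 s → u ≤ v →
      IntervalIntegrable (fun t => 1/(M * Gtail t)) volume u v := by
    intro u v hu hv huv
    apply MonotoneOn.intervalIntegrable
    refine hmono.mono ?_
    rw [Set.uIcc_of_le huv]
    exact Set.Icc_subset_Icc hu.1 hv.2
  rcases le_or_gt s 1 with hs1 | hs1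
  · -- case s ≤ 1
    have hpt : ∀ t ∈ Set.Icc (0:ℝ) s, 1/(M * Gtail t) ≤ 1/b := by
      intro t htm
      have h1 : Gtail s ≤ Gtail t := Gtail_anti htm.2
      rw [hGs] at h1
      apply one_div_le_one_div_of_le hb
      calc b = (b/M)*M := by field_simp
        _ ≤ Gtail t * M := mul_le_mul_of_nonneg_right h1 hM.le
        _ = M * Gtail t := mul_comm _ _
    have hIb : ∫ t in (0:ℝ)..s, 1/(M*Gtail t) ≤ ∫ t in (0:ℝ)..s, (1/b : ℝ) := by
      apply intervalIntegral.integral_mono_on hs0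
        (hint 0 s ⟨le_refl _, hs0⟩ ⟨hs0, le_refl _⟩ hs0) intervalIntegrable_const hpt
    rw [intervalIntegral.integral_const, smul_eq_mul] at hIb
    have hub : (1:ℝ)/10 ≤ b/M := by
      rw [← hGs]
      exact le_trans Gtail_one_lb (Gtail_anti hs1)
    have hMb10 : M/b ≤ 10 := by
      rw [div_le_iff₀ hb]
      rw [div_le_div_iff₀ (by norm_num) hM] at hub
      linarith
    have hL9 : L ≤ 9 := le_trans (Real.log_le_sub_one_of_pos hMbpos) (by linarith)
    have hsqL3 : Real.sqrt L ≤ 3 := by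
      calc Real.sqrt L ≤ Real.sqrt 9 := Real.sqrt_le_sqrt hL9
        _ = 3 := by rw [show (9:ℝ) = 3^2 by norm_num, Real.sqrt_sq (by norm_num : (0:ℝ) ≤ 3)]
    calc ∫ t in (0:ℝ)..s, 1/(M*Gtail t) ≤ (s - 0) * (1/b) := hIb
      _ ≤ 1/b := by
          rw [sub_zero, div_eq_mul_inv, one_mul]
          exact mul_le_of_le_one_left (inv_pos.2 hb).le hs1
      _ ≤ 50 / (b * Real.sqrt L) := by
          rw [div_le_div_iff₀ hb (by positivity)]
          linarith [mul_le_mul_of_nonneg_left hsqL3 hb.le]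
  · -- case 1 < s
    have h01 : (0:ℝ) ∈ Set.Icc (0:ℝ) s := ⟨le_refl _, hs0⟩
    have h11 : (1:ℝ) ∈ Set.Icc (0:ℝ) s := ⟨zero_le_one, hs1.le⟩
    have hss : s ∈ Set.Icc (0:ℝ) s := ⟨hs0, le_refl _⟩
    have hsplit := intervalIntegral.integral_add_adjacent_intervals
      (hint 0 1 h01 h11 zero_le_one) (hint 1 s h11 hss hs1.le)
    have hpart1 : ∫ t in (0:ℝ)..1, 1/(M*Gtail t) ≤ 10/M := by
      have hpt : ∀ t ∈ Set.Icc (0:ℝ) 1, 1/(M*Gtail t) ≤ 10/M := by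
        intro t htm
        have h1 : Gtail 1 ≤ Gtail t := Gtail_anti htm.2
        have h2 : (1:ℝ)/10 ≤ Gtail t := le_trans Gtail_one_lb h1
        rw [div_le_div_iff₀ (by positivity) hM]
        linarith [mul_le_mul_of_nonneg_left h2 hM.le]
      have := intervalIntegral.integral_mono_on zero_le_one
        (hint 0 1 h01 h11 zero_le_one) intervalIntegrable_const hpt
      rw [intervalIntegral.integral_const, smul_eq_mul, sub_zero, one_mul] at this
      exact this
    -- part 2
    have hEders : ∀ t ∈ Set.uIcc (1:ℝ) s, HasDerivAt (fun y => Real.exp (y^2/2))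
        (t * Real.exp (t^2/2)) t := by
      intro t _
      have h1 : HasDerivAt (fun y : ℝ => y^2/2) t t := by
        have := (hasDerivAt_pow 2 t).div_const 2
        simpa using this.congr_deriv (by ring)
      simpa [mul_comm] using h1.exp
    have hcont : Continuous (fun t : ℝ => t * Real.exp (t^2/2)) :=
      continuous_id.mul (Real.continuous_exp.comp ((continuous_pow 2).div_const 2))
    have hInt2 : ∫ t in (1:ℝ)..s, t * Real.exp (t^2/2)
        = Real.exp (s^2/2) - Real.exp (1^2/2) := by
      exact intervalIntegral.integral_eq_sub_of_hasDerivAt hEders (hcont.intervalIntegrable 1 s)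
    have hpt2 : ∀ t ∈ Set.Icc (1:ℝ) s, 1/(M*Gtail t) ≤ (8/M) * (t * Real.exp (t^2/2)) := by
      intro t htm
      have h1 := inv_Gtail_le htm.1
      have hGt := Gtail_pos t
      calc 1/(M*Gtail t) = (1/M) * (1/Gtail t) := by rw [one_div, one_div, one_div, mul_inv]
        _ ≤ (1/M) * (8 * (t * Real.exp (t^2/2))) := by
            apply mul_le_mul_of_nonneg_left h1 (by positivity)
        _ = (8/M) * (t * Real.exp (t^2/2)) := by ring
    have hpart2a : ∫ t in (1:ℝ)..s, 1/(M*Gtail t)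
        ≤ (8/M) * (Real.exp (s^2/2) - Real.exp (1^2/2)) := by
      have hgi : IntervalIntegrable (fun t => (8/M) * (t * Real.exp (t^2/2))) volume 1 s :=
        ((continuous_const.mul hcont).intervalIntegrable 1 s)
      have := intervalIntegral.integral_mono_on hs1.le
        (hint 1 s h11 hss hs1.le) hgi hpt2
      rwa [intervalIntegral.integral_const_mul, hInt2] at this
    -- upper bound on exp(s^2/2)
    have hspos : 0 < s := lt_trans one_pos hs1
    have hE : Real.exp (-s^2/2) = (Real.exp (s^2/2))⁻¹ := by
      rw [← Real.exp_neg]; ring_nf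
    have hEpos : 0 < Real.exp (s^2/2) := Real.exp_pos _
    have hkey : b/M ≤ 2 * ((Real.sqrt (2*Real.pi))⁻¹ * (Real.exp (-s^2/2)/s)) := by
      rw [← hGs, Gtail_eq]
      have := tail_upper hspos
      linarith
    have hsp : 0 < Real.sqrt (2*Real.pi) := lt_of_lt_of_le two_pos sqrt_two_pi_ge
    have hinv2 : (Real.sqrt (2*Real.pi))⁻¹ ≤ 1/2 := by
      rw [inv_le_iff_one_le_mul₀ hsp]
      nlinarith [sqrt_two_pi_ge]
    have hEle : Real.exp (s^2/2) ≤ M / (b * s) := by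
      have hposx : (0:ℝ) ≤ Real.exp (-s^2/2)/s := by positivity
      have hc : 2 * ((Real.sqrt (2*Real.pi))⁻¹ * (Real.exp (-s^2/2)/s))
          ≤ Real.exp (-s^2/2)/s := by
        have := mul_le_mul_of_nonneg_right hinv2 hposx
        linarith
      have h1 : b/M ≤ Real.exp (-s^2/2)/s := le_trans hkey hc
      rw [hE] at h1
      rw [le_div_iff₀ (by positivity : (0:ℝ) < b*s)]
      rw [div_le_div_iff₀ hM hspos] at h1
      calc Real.exp (s^2/2) * (b*s) ≤ Real.exp (s^2/2) * ((Real.exp (s^2/2))⁻¹ * M) := by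
            apply mul_le_mul_of_nonneg_left _ hEpos.le
            linarith
        _ = M := by field_simp
    -- lower bound on s via the lower tail bound
    have hexp3 : (12:ℝ) ≤ Real.exp 3 := twelve_le_exp_three
    have hsL2 : L ≤ s^2 + 3 := by
      have hlow := tail_lower hs1.le
      have hGs2 : 2 * (Real.exp (-(3:ℝ)/2) * ((Real.sqrt (2*Real.pi))⁻¹ *
          (Real.exp (-s^2/2)/s))) ≤ b/M := by
        rw [← hGs, Gtail_eq]; linarith
      have hse : s ≤ Real.exp (s^2/2) := le_exp_half_sq s
      have hdd : Real.exp (-s^2/2)/Real.exp (s^2/2) ≤ Real.exp (-s^2/2)/s :=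
        div_le_div_of_nonneg_left (Real.exp_pos _).le hspos hse
      have hee : Real.exp (-s^2/2)/Real.exp (s^2/2) = Real.exp (-s^2) := by
        rw [← Real.exp_sub]; ring_nf
      rw [hee] at hdd
      have hinvge : (1:ℝ)/3 ≤ (Real.sqrt (2*Real.pi))⁻¹ := by
        rw [one_div]
        exact inv_anti₀ hsp (by linarith [sqrt_two_pi_le])
      have he32 : (1:ℝ)/8 ≤ Real.exp (-(3:ℝ)/2) := by
        have h1 : Real.exp (-(3:ℝ)/2) = (Real.exp ((3:ℝ)/2))⁻¹ := by
          rw [← Real.exp_neg]; norm_num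
        rw [h1, one_div]
        exact inv_anti₀ (Real.exp_pos _) (by linarith [exp_32_le])
      have hlow2 : (1:ℝ)/12 * Real.exp (-s^2) ≤ b/M := by
        have hx : (0:ℝ) ≤ Real.exp (-s^2) := (Real.exp_pos _).le
        calc (1:ℝ)/12 * Real.exp (-s^2)
            ≤ 2 * (Real.exp (-(3:ℝ)/2) * ((Real.sqrt (2*Real.pi))⁻¹ * Real.exp (-s^2))) :=
              aux_lb he32 hinvge hx
          _ ≤ 2 * (Real.exp (-(3:ℝ)/2) * ((Real.sqrt (2*Real.pi))⁻¹ * (Real.exp (-s^2/2)/s))) := by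
              have h1 : (0:ℝ) ≤ Real.exp (-(3:ℝ)/2) := (Real.exp_pos _).le
              have h2 : (0:ℝ) ≤ (Real.sqrt (2*Real.pi))⁻¹ := by positivity
              apply mul_le_mul_of_nonneg_left _ (by norm_num : (0:ℝ) ≤ 2)
              apply mul_le_mul_of_nonneg_left _ h1
              exact mul_le_mul_of_nonneg_left hdd h2
          _ ≤ b/M := hGs2
      have hMb2 : M/b ≤ Real.exp (s^2 + 3) := by
        have hxi : Real.exp (-s^2) = (Real.exp (s^2))⁻¹ := by
          rw [← Real.exp_neg]
        rw [hxi] at hlow2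
        have h1 : M/b ≤ 12 * Real.exp (s^2) :=
          aux_Mb hM hb (Real.exp_pos _) hlow2
        calc M/b ≤ 12 * Real.exp (s^2) := h1
          _ ≤ Real.exp 3 * Real.exp (s^2) :=
              mul_le_mul_of_nonneg_right hexp3 (Real.exp_pos _).le
          _ = Real.exp (s^2 + 3) := by rw [← Real.exp_add]; ring_nf
      rw [hLdef, Real.log_le_iff_le_exp hMbpos]
      exact hMb2
    -- combine
    have hpart2 : ∫ t in (1:ℝ)..s, 1/(M*Gtail t) ≤ 32 / (b * Real.sqrt L) := by
      have hbs : ∫ t in (1:ℝ)..s, 1/(M*Gtail t) ≤ 8 / (b * s) := by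
        calc ∫ t in (1:ℝ)..s, 1/(M*Gtail t)
            ≤ (8/M) * (Real.exp (s^2/2) - Real.exp (1^2/2)) := hpart2a
          _ ≤ (8/M) * Real.exp (s^2/2) := by
              apply mul_le_mul_of_nonneg_left _ (by positivity)
              linarith [Real.exp_pos ((1:ℝ)^2/2)]
          _ ≤ (8/M) * (M / (b * s)) := by
              apply mul_le_mul_of_nonneg_left hEle (by positivity)
          _ = 8 / (b * s) := by field_simp
      rcases le_or_gt L 12 with hc1 | hc1
      · have hsqL4 : Real.sqrt L ≤ 4 := by
          calc Real.sqrt L ≤ Real.sqrt 16 := Real.sqrt_le_sqrt (by linarith)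
            _ = 4 := by
                rw [show (16:ℝ) = 4^2 by norm_num, Real.sqrt_sq (by norm_num : (0:ℝ) ≤ 4)]
        calc ∫ t in (1:ℝ)..s, 1/(M*Gtail t) ≤ 8 / (b * s) := hbs
          _ ≤ 8 / b := by
              apply div_le_div_of_nonneg_left (by norm_num) hb
              exact (le_mul_iff_one_le_right hb).2 hs1.le
          _ ≤ 32 / (b * Real.sqrt L) := by
              rw [div_le_div_iff₀ hb (by positivity)]
              linarith [mul_le_mul_of_nonneg_left hsqL4 hb.le]
      · have hs2L : Real.sqrt L ≤ 2 * s := by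
          have h1 : L ≤ (2*s)^2 := by linarith [hsL2, hc1]
          calc Real.sqrt L ≤ Real.sqrt ((2*s)^2) := Real.sqrt_le_sqrt h1
            _ = 2*s := Real.sqrt_sq (by linarith)
        calc ∫ t in (1:ℝ)..s, 1/(M*Gtail t) ≤ 8 / (b * s) := hbs
          _ = 16 / (b * (2*s)) := by rw [div_eq_div_iff (by positivity) (by positivity)]; ring
          _ ≤ 16 / (b * Real.sqrt L) := by
              apply div_le_div_of_nonneg_left (by norm_num) (by positivity)
              exact mul_le_mul_of_nonneg_left hs2L hb.le
          _ ≤ 32 / (b * Real.sqrt L) := by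
              apply div_le_div_of_nonneg_right (by norm_num) (by positivity)
    have hbM : b * Real.sqrt L ≤ M := by
      calc b * Real.sqrt L ≤ b * (M/b) := mul_le_mul_of_nonneg_left hsqL_le_Mb hb.le
        _ = M := by field_simp
    have hpart1' : ∫ t in (0:ℝ)..1, 1/(M*Gtail t) ≤ 10 / (b * Real.sqrt L) := by
      apply le_trans hpart1
      rw [div_le_div_iff₀ hM (by positivity)]
      linarith [hbM, hM]
    calc ∫ t in (0:ℝ)..s, 1/(M*Gtail t)
        = (∫ t in (0:ℝ)..1, 1/(M*Gtail t)) + ∫ t in (1:ℝ)..s, 1/(M*Gtail t) := hsplit.symm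
      _ ≤ 10 / (b * Real.sqrt L) + 32 / (b * Real.sqrt L) := add_le_add hpart1' hpart2
      _ ≤ 50 / (b * Real.sqrt L) := by
          rw [← add_div, div_le_div_iff₀ (by positivity) (by positivity)]
          linarith [mul_pos hb hsqLpos, mul_pos (mul_pos hb hsqLpos) (mul_pos hb hsqLpos)]
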